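/- The multi-cross ladder graph MCL_{4m,2} is isomorphic to the bi-Cayley graph BiCay(H, {c, ca}, {ca, ca²b}, {1}) over the group H = ⟨a, b, c | a^m = b² = c² = 1, ab = ba, cac⁻¹ = a⁻¹, cb = bc⟩, via an explicit vertex bijection. -/

import Mathlib

open DihedralGroup

/-- The bi-Cayley graph BiCay(H, R, L, S): vertex set H × Bool, right part H × {false},
left part H × {true}; right edges, left edges and spokes as usual. -/
def biCayleyGraph (H : Type*) [Group H] (R L S : Set H) : SimpleGraph (H × Bool) :=
  SimpleGraph.fromRel (fun p q =>
    (p.2 = false ∧ q.2 = false ∧ q.1 * p.1⁻¹ ∈ R) ∨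
    (p.2 = true ∧ q.2 = true ∧ q.1 * p.1⁻¹ ∈ L) ∨
    (p.2 = false ∧ q.2 = true ∧ q.1 * p.1⁻¹ ∈ S))

/-- The multi-cross ladder graph MCL_{4m,2}: vertices x_i^{r,s} = (i, r, s),
edges {x_{2i}^{r,s}, x_{2i+1}^{r,t}} and {x_{2i+1}^{r,s}, x_{2i+2}^{s,r}}. -/
def multiCrossLadder (m : ℕ) : SimpleGraph (ZMod (2 * m) × ZMod 2 × ZMod 2) :=
  SimpleGraph.fromRel (fun p q =>
    (∃ i : ℕ, p.1 = ((2 * i : ℕ) : ZMod (2 * m)) ∧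
      q.1 = ((2 * i + 1 : ℕ) : ZMod (2 * m)) ∧ p.2.1 = q.2.1) ∨
    (∃ i : ℕ, p.1 = ((2 * i + 1 : ℕ) : ZMod (2 * m)) ∧
      q.1 = ((2 * i + 2 : ℕ) : ZMod (2 * m)) ∧ q.2.1 = p.2.2 ∧ q.2.2 = p.2.1))

namespace Stmt13Aux

variable {m : ℕ}

lemma even_eq {a b : ℕ} :
    ((2*a : ℕ) : ZMod (2*m)) = ((2*b : ℕ) : ZMod (2*m)) ↔ (a : ZMod m) = (b : ZMod m) := by
  rw [ZMod.natCast_eq_natCast_iff, ZMod.natCast_eq_natCast_iff]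
  exact Nat.ModEq.mul_left_cancel_iff' two_ne_zero

lemma odd_eq {a b : ℕ} :
    ((2*a+1 : ℕ) : ZMod (2*m)) = ((2*b+1 : ℕ) : ZMod (2*m)) ↔ (a : ZMod m) = (b : ZMod m) := by
  rw [ZMod.natCast_eq_natCast_iff, ZMod.natCast_eq_natCast_iff]
  constructor
  · intro h
    exact Nat.ModEq.mul_left_cancel' two_ne_zero (Nat.ModEq.add_right_cancel' 1 h)
  · intro h
    exact Nat.ModEq.add_right 1 (Nat.ModEq.mul_left' 2 h)

lemma even_ne_odd {a b : ℕ} :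
    ((2*a : ℕ) : ZMod (2*m)) ≠ ((2*b+1 : ℕ) : ZMod (2*m)) := by
  rw [Ne, ZMod.natCast_eq_natCast_iff]
  intro h
  have h2 := h.of_dvd (dvd_mul_right 2 m)
  simp only [Nat.ModEq] at h2
  omega

lemma even_odd_iff {a b : ℕ} :
    (((2*a : ℕ) : ZMod (2*m)) = ((2*b+1 : ℕ) : ZMod (2*m))) ↔ False :=
  iff_false_intro even_ne_odd

lemma odd_even_iff {a b : ℕ} :
    (((2*a+1 : ℕ) : ZMod (2*m)) = ((2*b : ℕ) : ZMod (2*m))) ↔ False :=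
  iff_false_intro (Ne.symm even_ne_odd)

lemma F1 {a b : ℕ} {P : Prop} :
    (∃ i : ℕ, ((2*a : ℕ) : ZMod (2*m)) = ((2*i : ℕ) : ZMod (2*m)) ∧
      ((2*b+1 : ℕ) : ZMod (2*m)) = ((2*i+1 : ℕ) : ZMod (2*m)) ∧ P) ↔
      ((a : ZMod m) = (b : ZMod m) ∧ P) := by
  constructor
  · rintro ⟨i, h1, h2, hP⟩
    exact ⟨(even_eq.mp h1).trans (odd_eq.mp h2).symm, hP⟩
  · rintro ⟨h, hP⟩
    exact ⟨a, rfl, odd_eq.mpr h.symm, hP⟩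

lemma F2 {a b : ℕ} {P : Prop} :
    (∃ i : ℕ, ((2*a+1 : ℕ) : ZMod (2*m)) = ((2*i+1 : ℕ) : ZMod (2*m)) ∧
      ((2*b : ℕ) : ZMod (2*m)) = ((2*i+2 : ℕ) : ZMod (2*m)) ∧ P) ↔
      ((b : ZMod m) = (a : ZMod m) + 1 ∧ P) := by
  have key : ∀ i : ℕ, (2*i+2 : ℕ) = 2*(i+1) := fun i => by ring
  constructor
  · rintro ⟨i, h1, h2, hP⟩
    rw [key] at h2
    have h3 := even_eq.mp h2
    push_cast at h3
    rw [h3, odd_eq.mp h1]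
    exact ⟨rfl, hP⟩
  · rintro ⟨h, hP⟩
    refine ⟨a, rfl, ?_, hP⟩
    rw [key]
    refine even_eq.mpr ?_
    push_cast
    exact h

lemma noPO {a : ℕ} {f : ℕ → Prop} :
    (∃ i : ℕ, ((2*a+1 : ℕ) : ZMod (2*m)) = ((2*i : ℕ) : ZMod (2*m)) ∧ f i) ↔ False := by
  simp only [iff_false]
  rintro ⟨i, h1, -⟩
  exact even_ne_odd h1.symm

lemma noPE {a : ℕ} {f : ℕ → Prop} :
    (∃ i : ℕ, ((2*a : ℕ) : ZMod (2*m)) = ((2*i+1 : ℕ) : ZMod (2*m)) ∧ f i) ↔ False := by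
  simp only [iff_false]
  rintro ⟨i, h1, -⟩
  exact even_ne_odd h1

lemma noQE {b : ℕ} {f g : ℕ → Prop} :
    (∃ i : ℕ, g i ∧ ((2*b : ℕ) : ZMod (2*m)) = ((2*i+1 : ℕ) : ZMod (2*m)) ∧ f i) ↔ False := by
  simp only [iff_false]
  rintro ⟨i, -, h1, -⟩
  exact even_ne_odd h1

lemma noQO {b : ℕ} {f g : ℕ → Prop} :
    (∃ i : ℕ, g i ∧ ((2*b+1 : ℕ) : ZMod (2*m)) = ((2*i+2 : ℕ) : ZMod (2*m)) ∧ f i) ↔ False := by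
  simp only [iff_false]
  rintro ⟨i, -, h1, -⟩
  have key : (2*i+2 : ℕ) = 2*(i+1) := by ring
  rw [key] at h1
  exact even_ne_odd h1.symm

lemma cv [NeZero m] (k : ZMod m) : ((k.val : ℕ) : ZMod m) = k :=
  ZMod.natCast_rightInverse k

lemma cvm [NeZero m] (hm : 1 ≤ m) (k : ZMod m) : ((k.val + m - 1 : ℕ) : ZMod m) = k - 1 := by
  have h : k.val + m - 1 = k.val + (m - 1) := by omega
  rw [h]
  push_cast [hm]
  rw [ZMod.natCast_self, cv]
  ring

lemma inv_r (i : ZMod m) : (r i)⁻¹ = r (-i) := rfl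

lemma inv_sr (i : ZMod m) : (sr i)⁻¹ = sr i := rfl

lemma mEq (ε δ : Multiplicative (ZMod 2)) : δ * ε⁻¹ = 1 ↔ δ.toAdd = ε.toAdd := by
  revert ε δ; decide

lemma mG (ε δ : Multiplicative (ZMod 2)) :
    δ * ε⁻¹ = Multiplicative.ofAdd 1 ↔ δ.toAdd = 1 - ε.toAdd := by
  revert ε δ; decide

/-- The vertex bijection (as a function from the bi-Cayley side). -/
def psi (m : ℕ) : (DihedralGroup m × Multiplicative (ZMod 2)) × Bool →
    ZMod (2*m) × ZMod 2 × ZMod 2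
  | ⟨⟨r k, ε⟩, false⟩ => (((2*k.val : ℕ) : ZMod (2*m)), ε.toAdd, ε.toAdd)
  | ⟨⟨sr k, ε⟩, false⟩ => (((2*(k.val + m - 1)+1 : ℕ) : ZMod (2*m)), ε.toAdd, ε.toAdd)
  | ⟨⟨sr k, ε⟩, true⟩ => (((2*(k.val + m - 1) : ℕ) : ZMod (2*m)), ε.toAdd, 1 - ε.toAdd)
  | ⟨⟨r k, ε⟩, true⟩ => (((2*k.val+1 : ℕ) : ZMod (2*m)), ε.toAdd, 1 - ε.toAdd)

lemma z2f1 (x y : ZMod 2) : (x = y ∧ x = 1 - y) ↔ False := by revert x y; decide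
lemma z2f2 (x y : ZMod 2) : (x = y ∧ 1 - x = y) ↔ False := by revert x y; decide
lemma z2f3 (x y : ZMod 2) : (x = 1 - y ∧ x = y) ↔ False := by revert x y; decide
lemma shift (a b : ZMod m) : (a = -1 + b) ↔ (b = 1 + a) := by
  constructor <;> intro h <;> linear_combination -h

lemma z2b (x y : ZMod 2) : (x = 1 - y) ↔ (y = 1 - x) := by revert x y; decide
lemma z2d (x y : ZMod 2) : (x = 1 - y ∧ 1 - x = y) ↔ x = 1 - y := by revert x y; decide

lemma r_eq_one (i : ZMod m) : r i = 1 ↔ i = 0 := by rw [one_def]; simp [-r_zero]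
lemma sr_eq_one (i : ZMod m) : sr i = 1 ↔ False := by rw [one_def]; simp [-r_zero]

lemma psi_inj [NeZero m] (hm : 1 ≤ m) : Function.Injective (psi m) := by
  rintro ⟨⟨kx | kx, ε⟩, _ | _⟩ ⟨⟨ky | ky, δ⟩, _ | _⟩ h <;>
    simp only [psi, Prod.mk.injEq, even_eq, odd_eq, even_odd_iff, odd_even_iff,
      cv, cvm hm, sub_left_inj, sub_right_inj, z2f1, z2f2, and_false, false_and,
      and_self] at h <;>
    simp_all [EmbeddingLike.apply_eq_iff_eq]

end Stmt13Aux

namespace Stmt13Aux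

variable {m : ℕ}

set_option maxHeartbeats 1000000 in
lemma main [NeZero m] (hm : 1 ≤ m) (p q : (DihedralGroup m × Multiplicative (ZMod 2)) × Bool) :
    (multiCrossLadder m).Adj (psi m p) (psi m q) ↔
    (biCayleyGraph (DihedralGroup m × Multiplicative (ZMod 2))
        {(sr 0, 1), (sr 0, 1) * (r 1, 1)}
        {(sr 0, 1) * (r 1, 1),
          (sr 0, 1) * (r 1, 1) ^ 2 * (1, Multiplicative.ofAdd (1 : ZMod 2))}
        {1}).Adj p q := by
  rw [multiCrossLadder, biCayleyGraph, SimpleGraph.fromRel_adj, SimpleGraph.fromRel_adj]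
  apply and_congr (psi_inj hm).ne_iff
  obtain ⟨⟨kx | kx, ε⟩, _ | _⟩ := p <;> obtain ⟨⟨ky | ky, δ⟩, _ | _⟩ := q <;>
    simp only [psi, F1, F2, noPE, noPO, noQE, noQO, cv, cvm hm,
      Set.mem_insert_iff, Set.mem_singleton_iff, Prod.mk_mul_mk, Prod.inv_mk,
      inv_r, inv_sr, r_mul_r, r_mul_sr, sr_mul_r, sr_mul_sr, pow_two,
      Prod.mk.injEq, r.injEq, sr.injEq, reduceCtorEq, mEq, mG, Prod.mk_eq_one, r_eq_one, sr_eq_one, z2f1, z2f2, z2f3, z2d,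
      one_mul, mul_one, zero_add, add_zero, false_or, or_false, false_and, and_false,
      true_and, and_true, false_iff, iff_false, not_or, not_and, or_self, exists_false, and_self] <;>
    simp only [← sub_eq_add_neg, sub_eq_zero, sub_eq_iff_eq_add, sub_add_cancel, sub_left_inj,
      add_left_inj] <;>
    ring_nf <;>
    simp [z2b, shift, eq_comm, or_comm, or_assoc, or_left_comm, and_comm, and_assoc, and_left_comm]

lemma psi_bij (hm : 2 ≤ m) [NeZero m] [NeZero (2*m)] : Function.Bijective (psi m) := by
  rw [Fintype.bijective_iff_injective_and_card]
  refine ⟨psi_inj (by omega), ?_⟩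
  simp only [Fintype.card_prod, DihedralGroup.card, ZMod.card, Fintype.card_multiplicative,
    Fintype.card_bool]
  ring

end Stmt13Aux

/-- MCL_{4m,2} ≅ BiCay(H, {c, ca}, {ca, ca²b}, {1}) over
H = ⟨a,b,c | a^m = b² = c² = 1, ab = ba, cac⁻¹ = a⁻¹, cb = bc⟩ ≅ D_{2m} × Z₂,
with a = (r 1, 1), b = (1, gen), c = (sr 0, 1). -/
theorem stmt13 (m : ℕ) (hm : 2 ≤ m) :
    Nonempty (multiCrossLadder m ≃g
      biCayleyGraph (DihedralGroup m × Multiplicative (ZMod 2))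
        {(sr 0, 1), (sr 0, 1) * (r 1, 1)}
        {(sr 0, 1) * (r 1, 1),
          (sr 0, 1) * (r 1, 1) ^ 2 * (1, Multiplicative.ofAdd (1 : ZMod 2))}
        {1}) := by
  haveI : NeZero m := ⟨by omega⟩
  haveI : NeZero (2*m) := ⟨by omega⟩
  refine ⟨(SimpleGraph.Iso.symm ?_)⟩
  exact
    { toEquiv := Equiv.ofBijective (Stmt13Aux.psi m) (Stmt13Aux.psi_bij hm)
      map_rel_iff' := fun {a b} => Stmt13Aux.main (by omega) a b }
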